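/- Let Q : Matrix (Fin 7) (Fin 7) ℂ be the adjacency matrix of the extended Dynkin graph Ẽ_6, with vertex 0 the central vertex and three arms 0 — 1 — 2, 0 — 3 — 4, 0 — 5 — 6: Q i j = 1 (and Q j i = 1) exactly when {i, j} is one of {0,1}, {1,2}, {0,3}, {3,4}, {0,5}, {5,6}, and all other entries are 0. Then spectralRadius ℂ Q = 2. -/

import Mathlib

open Matrix Polynomial

/-- Integer adjacency matrix of `Ẽ_6`. -/
def Etilde6AuxA : Matrix (Fin 7) (Fin 7) ℤ := Matrix.of fun i j =>
  if (i.val, j.val) ∈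
      ({(0, 1), (1, 0), (1, 2), (2, 1), (0, 3), (3, 0), (3, 4), (4, 3),
        (0, 5), (5, 0), (5, 6), (6, 5)} : Finset (ℕ × ℕ)) then 1 else 0

/-- Integer Perron eigenvector of `Ẽ_6`. -/
def Etilde6AuxW : Fin 7 → ℤ := fun i =>
  if i.val = 0 then 3 else if i.val % 2 = 1 then 2 else 1

lemma Etilde6AuxA_annihilated :
    Etilde6AuxA * (Etilde6AuxA ^ 2 - 1) * (Etilde6AuxA ^ 2 - 4) = 0 := by decide

lemma Etilde6AuxA_mulVec : (2 - Etilde6AuxA).mulVec Etilde6AuxW = 0 := by decide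

/-- The adjacency matrix of the extended Dynkin graph `Ẽ_6` has spectral radius `2`.
Vertex `0` is the central vertex and the three arms are `0 — 1 — 2`, `0 — 3 — 4`,
`0 — 5 — 6`. -/
theorem spectralRadius_Etilde6_eq_two
    (Q : Matrix (Fin 7) (Fin 7) ℂ)
    (hQ : ∀ i j : Fin 7, Q i j =
      if (i.val, j.val) ∈
          ({(0, 1), (1, 0), (1, 2), (2, 1), (0, 3), (3, 0), (3, 4), (4, 3),
            (0, 5), (5, 0), (5, 6), (6, 5)} : Finset (ℕ × ℕ))
      then 1 else 0) :
    spectralRadius ℂ Q = 2 := by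
  set f : Matrix (Fin 7) (Fin 7) ℤ →+* Matrix (Fin 7) (Fin 7) ℂ :=
    (Int.castRingHom ℂ).mapMatrix with hf
  have hQA : Q = f Etilde6AuxA := by
    ext i j
    rw [hQ]
    simp only [hf, RingHom.mapMatrix_apply, Matrix.map_apply, Etilde6AuxA, Matrix.of_apply,
      apply_ite (Int.castRingHom ℂ)]
    simp
  -- the polynomial `X (X² - 1)(X² - 4)` annihilates `Q`
  set p : ℂ[X] := X * (X ^ 2 - C 1) * (X ^ 2 - C 4) with hp
  have hdeg : 0 < p.degree := by
    have : p.degree = 5 := by rw [hp]; compute_degree!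
    rw [this]; norm_num
  have haeval : aeval Q p = 0 := by
    have expand : aeval Q p = Q * (Q ^ 2 - 1) * (Q ^ 2 - 4) := by
      rw [hp]
      simp only [_root_.map_mul, _root_.map_sub, map_pow, aeval_X, aeval_C, _root_.map_one,
        map_ofNat]
    rw [expand, hQA, ← map_pow, ← _root_.map_one f, ← map_ofNat f 4, ← _root_.map_sub,
      ← _root_.map_sub, ← _root_.map_mul, ← _root_.map_mul, Etilde6AuxA_annihilated, map_zero]
  -- hence every spectral value satisfies `k (k²-1)(k²-4) = 0`
  have hspec := spectrum.map_polynomial_aeval_of_degree_pos Q p hdeg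
  rw [haeval, spectrum.zero_eq] at hspec
  have hroot : ∀ k ∈ spectrum ℂ Q, k * (k ^ 2 - 1) * (k ^ 2 - 4) = 0 := by
    intro k hk
    have : (fun x => eval x p) k ∈ ({0} : Set ℂ) := by
      rw [hspec]; exact Set.mem_image_of_mem _ hk
    simpa [hp] using this
  -- upper bound
  have hub : spectralRadius ℂ Q ≤ 2 := by
    unfold spectralRadius
    refine iSup₂_le fun k hk => ?_
    have hnorm : ‖k‖ ≤ 2 := by
      rcases mul_eq_zero.mp (hroot k hk) with h | h
      · rcases mul_eq_zero.mp h with h | h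
        · rw [h]; norm_num
        · have h2 : k ^ 2 = 1 := by linear_combination h
          have : ‖k‖ ^ 2 = 1 := by rw [← norm_pow, h2, norm_one]
          nlinarith [norm_nonneg k]
      · have h2 : k ^ 2 = 4 := by linear_combination h
        have : ‖k‖ ^ 2 = 4 := by
          rw [← norm_pow, h2]
          norm_num [Complex.norm_ofNat]
        nlinarith [norm_nonneg k]
    have h2 : ‖k‖₊ ≤ (2 : NNReal) := by
      rw [← NNReal.coe_le_coe, coe_nnnorm]
      exact_mod_cast hnorm
    calc (‖k‖₊ : ENNReal) ≤ ((2 : NNReal) : ENNReal) := ENNReal.coe_le_coe.mpr h2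
      _ = 2 := by norm_num
  -- lower bound: `2` is an eigenvalue
  have hmem : (2 : ℂ) ∈ spectrum ℂ Q := by
    rw [spectrum.mem_iff]
    intro hunit
    rw [Matrix.isUnit_iff_isUnit_det, isUnit_iff_ne_zero] at hunit
    apply hunit
    rw [← Matrix.exists_mulVec_eq_zero_iff]
    refine ⟨fun i => ((Etilde6AuxW i : ℤ) : ℂ), ?_, ?_⟩
    · intro h
      have := congrFun h 0
      simp [Etilde6AuxW] at this
    · have key : algebraMap ℂ (Matrix (Fin 7) (Fin 7) ℂ) 2 - Q = f (2 - Etilde6AuxA) := by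
        simp only [hQA, _root_.map_sub, map_ofNat]
      rw [key]
      funext j
      have h0 := congrFun Etilde6AuxA_mulVec j
      simp only [Matrix.mulVec, dotProduct, Pi.zero_apply] at h0 ⊢
      simp only [hf, RingHom.mapMatrix_apply, Matrix.map_apply, Int.coe_castRingHom]
      exact_mod_cast congrArg (fun z : ℤ => (z : ℂ)) h0
  have hlb : 2 ≤ spectralRadius ℂ Q := by
    have := le_iSup₂ (f := fun k (_ : k ∈ spectrum ℂ Q) => (‖k‖₊ : ENNReal)) 2 hmem
    unfold spectralRadius
    simpa using this
  exact le_antisymm hub hlb
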